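/- For positive integers n, k, x with 2 ≤ x ≤ n−k−x, the Harary index of B_k(x, n−k−x) equals (−6x² + (6n−8k)x + 3n² − 3n + 8k)/12. -/
import Mathlib


open Finset
open scoped Classical

/-- Wiener index: sum of distances over unordered pairs of vertices. -/
noncomputable def wiener {V : Type*} [Fintype V] (G : SimpleGraph V) : ℚ :=
  (1/2) * ∑ u : V, ∑ v : V, (G.dist u v : ℚ)

/-- Harary index: sum of reciprocal distances over unordered pairs of distinct vertices. -/
noncomputable def harary {V : Type*} [Fintype V] (G : SimpleGraph V) : ℚ :=
  (1/2) * ∑ p ∈ Finset.univ.offDiag, (1 : ℚ) / (G.dist p.1 p.2 : ℚ)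

/-- Hyper-Wiener index: (1/2) Σ_{unordered pairs} (d + d²). -/
noncomputable def hyperWiener {V : Type*} [Fintype V] (G : SimpleGraph V) : ℚ :=
  (1/4) * ∑ u : V, ∑ v : V, ((G.dist u v : ℚ) + (G.dist u v : ℚ)^2)

/-- Eccentricity of a vertex: maximum distance to any other vertex. -/
noncomputable def ecc {V : Type*} [Fintype V] (G : SimpleGraph V) (u : V) : ℕ :=
  Finset.univ.sup (fun v => G.dist u v)

/-- Connective eccentricity index: Σ_u deg(u)/ε(u). -/
noncomputable def cei {V : Type*} [Fintype V] (G : SimpleGraph V) : ℚ :=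
  ∑ u : V, (G.degree u : ℚ) / (ecc G u : ℚ)

/-- Eccentricity distance sum: Σ_u ε(u)·D(u). -/
noncomputable def eds {V : Type*} [Fintype V] (G : SimpleGraph V) : ℚ :=
  ∑ u : V, (ecc G u : ℚ) * ∑ v : V, (G.dist u v : ℚ)

/-- `Bgraph x y k w`: the bipartite graph obtained from the complete bipartite graph
`K_{x,y}` (parts `Fin x` and `Fin y`) by attaching `k` pendant vertices to the vertex `w`
of the part of size `x`. With `y = n - k - x` this is the graph `B_k(x, n-k-x)`. -/
def Bgraph (x y k : ℕ) (w : Fin x) : SimpleGraph ((Fin x ⊕ Fin y) ⊕ Fin k) :=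
  SimpleGraph.fromRel (fun p q =>
    (∃ i j, p = Sum.inl (Sum.inl i) ∧ q = Sum.inl (Sum.inr j)) ∨
    (∃ m, p = Sum.inr m ∧ q = Sum.inl (Sum.inl w)))

section Aux

open SimpleGraph

variable {x y k : ℕ} {w : Fin x}

lemma Bgraph.adj_ab (i : Fin x) (j : Fin y) :
    (Bgraph x y k w).Adj (.inl (.inl i)) (.inl (.inr j)) := by
  rw [Bgraph, SimpleGraph.fromRel_adj]
  exact ⟨by simp, Or.inl (Or.inl ⟨i, j, rfl, rfl⟩)⟩

lemma Bgraph.adj_pw (m : Fin k) :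
    (Bgraph x y k w).Adj (.inr m) (.inl (.inl w)) := by
  rw [Bgraph, SimpleGraph.fromRel_adj]
  exact ⟨by simp, Or.inl (Or.inr ⟨m, rfl, rfl⟩)⟩

lemma Bgraph.not_adj_aa (i i' : Fin x) :
    ¬ (Bgraph x y k w).Adj (.inl (.inl i)) (.inl (.inl i')) := by
  simp [Bgraph, SimpleGraph.fromRel_adj]

lemma Bgraph.not_adj_bb (j j' : Fin y) :
    ¬ (Bgraph x y k w).Adj (.inl (.inr j)) (.inl (.inr j')) := by
  simp [Bgraph, SimpleGraph.fromRel_adj]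

lemma Bgraph.not_adj_pp (m m' : Fin k) :
    ¬ (Bgraph x y k w).Adj (.inr m) (.inr m') := by
  simp [Bgraph, SimpleGraph.fromRel_adj]

lemma Bgraph.not_adj_bp (j : Fin y) (m : Fin k) :
    ¬ (Bgraph x y k w).Adj (.inl (.inr j)) (.inr m) := by
  simp [Bgraph, SimpleGraph.fromRel_adj]

lemma Bgraph.not_adj_ap {i : Fin x} (hi : i ≠ w) (m : Fin k) :
    ¬ (Bgraph x y k w).Adj (.inl (.inl i)) (.inr m) := by
  simp [Bgraph, SimpleGraph.fromRel_adj, hi]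

lemma dist_eq_two' {V : Type*} {G : SimpleGraph V} {u v z : V} (hne : u ≠ v)
    (h1 : ¬ G.Adj u v) (h2 : G.Adj u z) (h3 : G.Adj z v) : G.dist u v = 2 := by
  have hle : G.dist u v ≤ 2 := by
    simpa using G.dist_le (Walk.cons h2 (Walk.cons h3 Walk.nil))
  have h0 : G.dist u v ≠ 0 := by
    rw [SimpleGraph.dist_ne_zero_iff_ne_and_reachable]
    exact ⟨hne, ⟨Walk.cons h2 (Walk.cons h3 Walk.nil)⟩⟩
  have h1' : G.dist u v ≠ 1 := by
    simp only [ne_eq, SimpleGraph.dist_eq_one_iff_adj]; exact h1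
  omega

lemma dist_eq_three' {V : Type*} {G : SimpleGraph V} {u v a b : V} (hne : u ≠ v)
    (h1 : ¬ G.Adj u v)
    (hcn : ∀ z, G.Adj u z → ¬ G.Adj z v)
    (h2 : G.Adj u a) (h3 : G.Adj a b) (h4 : G.Adj b v) : G.dist u v = 3 := by
  have hle : G.dist u v ≤ 3 := by
    simpa using G.dist_le (Walk.cons h2 (Walk.cons h3 (Walk.cons h4 Walk.nil)))
  have h0 : G.dist u v ≠ 0 := by
    rw [SimpleGraph.dist_ne_zero_iff_ne_and_reachable]
    exact ⟨hne, ⟨Walk.cons h2 (Walk.cons h3 (Walk.cons h4 Walk.nil))⟩⟩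
  have h1' : G.dist u v ≠ 1 := by
    simp only [ne_eq, SimpleGraph.dist_eq_one_iff_adj]; exact h1
  have h2' : G.dist u v ≠ 2 := by
    intro h
    obtain ⟨p, hp⟩ := SimpleGraph.exists_walk_of_dist_ne_zero (G := G) (u := u) (v := v)
      (by omega)
    rw [h] at hp
    cases p with
    | nil => simp at hp
    | cons ha q =>
      cases q with
      | nil => simp at hp
      | cons hb q' =>
        cases q' with
        | nil => exact hcn _ ha hb
        | cons hc q'' => simp [SimpleGraph.Walk.length_cons] at hp
  omega

lemma sum_ite_left {α : Type*} [Fintype α] [DecidableEq α] (i : α) (a b : ℚ) :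
    ∑ j : α, (if i = j then a else b) = a - b + (Fintype.card α : ℚ) * b := by
  have h : ∀ j : α, (if i = j then a else b) = (if i = j then a - b else 0) + b := by
    intro j; split <;> ring
  simp_rw [h, Finset.sum_add_distrib, Finset.sum_ite_eq, Finset.mem_univ, if_true,
    Finset.sum_const, Finset.card_univ, nsmul_eq_mul]

lemma sum_ite_right {α : Type*} [Fintype α] [DecidableEq α] (i : α) (a b : ℚ) :
    ∑ j : α, (if j = i then a else b) = a - b + (Fintype.card α : ℚ) * b := by
  have h : ∀ j : α, (if j = i then a else b) = (if i = j then a else b) := by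
    intro j; simp [eq_comm]
  simp_rw [h, sum_ite_left]

lemma offDiag_sum_eq {α : Type*} [Fintype α] [DecidableEq α] (f : α → α → ℚ)
    (hf : ∀ a, f a a = 0) :
    ∑ p ∈ (Finset.univ : Finset α).offDiag, f p.1 p.2 = ∑ u : α, ∑ v : α, f u v := by
  rw [← Finset.sum_product']
  apply Finset.sum_subset
  · intro p hp; simp [Finset.mem_product]
  · intro p _ hnp
    have hpp : p.1 = p.2 := by
      by_contra hne
      exact hnp (by simp [Finset.mem_offDiag, hne])
    rw [hpp, hf]

end Aux

/-- Reciprocal-distance table for `Bgraph`. -/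
def Dval (x y k : ℕ) (w : Fin x) :
    (Fin x ⊕ Fin y) ⊕ Fin k → (Fin x ⊕ Fin y) ⊕ Fin k → ℚ
  | .inl (.inl i), .inl (.inl i') => if i = i' then 0 else 1/2
  | .inl (.inl _), .inl (.inr _) => 1
  | .inl (.inr _), .inl (.inl _) => 1
  | .inl (.inr j), .inl (.inr j') => if j = j' then 0 else 1/2
  | .inl (.inl i), .inr _ => if i = w then 1 else 1/3
  | .inr _, .inl (.inl i) => if i = w then 1 else 1/3
  | .inl (.inr _), .inr _ => 1/2
  | .inr _, .inl (.inr _) => 1/2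
  | .inr m, .inr m' => if m = m' then 0 else 1/2

/-- Harary index of `B_k(x, n-k-x)` (here `y = n - k - x`). -/
theorem harary_Bgraph (n k x y : ℕ) (hn : n = x + y + k) (hk : 1 ≤ k)
    (hx : 2 ≤ x) (hxy : x ≤ y) (w : Fin x) :
    harary (Bgraph x y k w)
      = (-6 * (x : ℚ)^2 + (6 * (n : ℚ) - 8 * k) * x + 3 * (n : ℚ)^2 - 3 * n + 8 * k) / 12 := by
  subst hn
  have hy : 0 < y := lt_of_lt_of_le (by omega) hxy
  have hx0 : 0 < x := by omega
  set b0 : Fin y := ⟨0, hy⟩ with hb0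
  set G := Bgraph x y k w with hG
  have key : ∀ u v : (Fin x ⊕ Fin y) ⊕ Fin k,
      (1 : ℚ) / (G.dist u v : ℚ) = Dval x y k w u v := by
    have key3 : ∀ (i : Fin x) (m : Fin k),
        (1 : ℚ) / (G.dist (.inl (.inl i)) (.inr m) : ℚ) = (if i = w then 1 else 1/3) := by
      intro i m'
      by_cases h : i = w
      · subst h
        rw [SimpleGraph.dist_eq_one_iff_adj.mpr (Bgraph.adj_pw m').symm]
        norm_num
      · rw [dist_eq_three' (by simp) (Bgraph.not_adj_ap h m')
          (fun z hz hz' => by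
            obtain (i2|j2)|m2 := z
            · exact Bgraph.not_adj_aa i i2 hz
            · exact Bgraph.not_adj_bp j2 m' hz'
            · exact Bgraph.not_adj_ap h m2 hz)
          (Bgraph.adj_ab i b0) (Bgraph.adj_ab w b0).symm (Bgraph.adj_pw m').symm]
        norm_num [h]
    have key6 : ∀ (j : Fin y) (m : Fin k),
        (1 : ℚ) / (G.dist (.inl (.inr j)) (.inr m) : ℚ) = 1/2 := by
      intro j m'
      rw [dist_eq_two' (by simp) (Bgraph.not_adj_bp j m')
        (Bgraph.adj_ab w j).symm (Bgraph.adj_pw m').symm]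
      norm_num
    intro u v
    obtain (i|j)|m := u <;> obtain (i'|j')|m' := v
    · by_cases h : i = i'
      · subst h; simp [Dval, SimpleGraph.dist_self]
      · rw [dist_eq_two' (by simp [h]) (Bgraph.not_adj_aa i i')
          (Bgraph.adj_ab i b0) (Bgraph.adj_ab i' b0).symm]
        norm_num [Dval, h]
    · rw [SimpleGraph.dist_eq_one_iff_adj.mpr (Bgraph.adj_ab i j')]
      norm_num [Dval]
    · rw [key3 i m']; simp [Dval]
    · rw [SimpleGraph.dist_comm,
        SimpleGraph.dist_eq_one_iff_adj.mpr (Bgraph.adj_ab i' j)]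
      norm_num [Dval]
    · by_cases h : j = j'
      · subst h; simp [Dval, SimpleGraph.dist_self]
      · rw [dist_eq_two' (by simp [h]) (Bgraph.not_adj_bb j j')
          (Bgraph.adj_ab w j).symm (Bgraph.adj_ab w j')]
        norm_num [Dval, h]
    · rw [key6 j m']; simp [Dval]
    · rw [SimpleGraph.dist_comm, key3 i' m]; simp [Dval]
    · rw [SimpleGraph.dist_comm, key6 j' m]; simp [Dval]
    · by_cases h : m = m'
      · subst h; simp [Dval, SimpleGraph.dist_self]
      · rw [dist_eq_two' (by simp [h]) (Bgraph.not_adj_pp m m')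
          (Bgraph.adj_pw m) (Bgraph.adj_pw m').symm]
        norm_num [Dval, h]
  have hdiag : ∀ a, Dval x y k w a a = 0 := by
    intro a; obtain (i|j)|m := a <;> simp [Dval]
  simp only [harary]
  simp_rw [key]
  rw [@offDiag_sum_eq _ _ (Classical.decEq _) (Dval x y k w) hdiag]
  have total : ∑ u : (Fin x ⊕ Fin y) ⊕ Fin k, ∑ v : (Fin x ⊕ Fin y) ⊕ Fin k,
      Dval x y k w u v
      = (x : ℚ) * ((x : ℚ) - 1) / 2 + (y : ℚ) * ((y : ℚ) - 1) / 2
        + (k : ℚ) * ((k : ℚ) - 1) / 2 + 2 * x * y + y * k + 2 * k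
        + 2 * ((x : ℚ) - 1) * k / 3 := by
    simp [Dval, Fintype.sum_sum_type, Finset.sum_add_distrib, Finset.sum_const,
      Finset.card_univ, Fintype.card_fin, nsmul_eq_mul, mul_ite, mul_one,
      sum_ite_left, sum_ite_right, Finset.mul_sum]
    push_cast
    ring
  rw [total]
  push_cast
  ring
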